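/- Let G=(V,E) be a k-uniform hypergraph on n vertices and let G' be a sub-hypergraph of G, with signless Laplacian tensors Q and Q' respectively. Then λ(Q') ≤ λ(Q); if moreover G' and G are both connected, then λ(Q')=λ(Q) if and only if G'=G. Consequently, λ(Q) ≤ 2·C(n−1,k−1), with equality holding if and only if G is the k-uniform complete hypergraph on n vertices. -/

import Mathlib

open Finset

variable {α : Type*} [DecidableEq α]

/-- The degree of a vertex `i`: the number of edges containing `i`. -/
def hdeg (E : Finset (Finset α)) (i : α) : ℕ := (E.filter (fun e => i ∈ e)).card

/-- The action of the Laplacian tensor: `(L x^{k-1})_i`. -/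
def lapAct (k : ℕ) (E : Finset (Finset α)) (x : α → ℝ) (i : α) : ℝ :=
  (hdeg E i : ℝ) * x i ^ (k - 1) - ∑ e ∈ E.filter (fun e => i ∈ e), ∏ j ∈ e.erase i, x j

/-- The action of the signless Laplacian tensor: `(Q x^{k-1})_i`. -/
def signAct (k : ℕ) (E : Finset (Finset α)) (x : α → ℝ) (i : α) : ℝ :=
  (hdeg E i : ℝ) * x i ^ (k - 1) + ∑ e ∈ E.filter (fun e => i ∈ e), ∏ j ∈ e.erase i, x j

/-- The action of the adjacency tensor: `(A x^{k-1})_i`. -/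
def adjAct (E : Finset (Finset α)) (x : α → ℝ) (i : α) : ℝ :=
  ∑ e ∈ E.filter (fun e => i ∈ e), ∏ j ∈ e.erase i, x j

/-- `lam` is an H-eigenvalue of the Laplacian tensor. -/
def IsLapEig (k : ℕ) (E : Finset (Finset α)) (lam : ℝ) : Prop :=
  ∃ x : α → ℝ, x ≠ 0 ∧ ∀ i, lapAct k E x i = lam * x i ^ (k - 1)

/-- `lam` is the largest H-eigenvalue of the Laplacian tensor. -/
def IsLargestLapEig (k : ℕ) (E : Finset (Finset α)) (lam : ℝ) : Prop :=
  IsLapEig k E lam ∧ ∀ mu : ℝ, IsLapEig k E mu → mu ≤ lam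

/-- `lam` is an H-eigenvalue of the signless Laplacian tensor. -/
def IsSignEig (k : ℕ) (E : Finset (Finset α)) (lam : ℝ) : Prop :=
  ∃ x : α → ℝ, x ≠ 0 ∧ ∀ i, signAct k E x i = lam * x i ^ (k - 1)

/-- `lam` is the largest H-eigenvalue of the signless Laplacian tensor. -/
def IsLargestSignEig (k : ℕ) (E : Finset (Finset α)) (lam : ℝ) : Prop :=
  IsSignEig k E lam ∧ ∀ mu : ℝ, IsSignEig k E mu → mu ≤ lam

/-- `lam` is an H-eigenvalue of the adjacency tensor. -/
def IsAdjEig (k : ℕ) (E : Finset (Finset α)) (lam : ℝ) : Prop :=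
  ∃ x : α → ℝ, x ≠ 0 ∧ ∀ i, adjAct E x i = lam * x i ^ (k - 1)

/-- `lam` is the largest H-eigenvalue of the adjacency tensor. -/
def IsLargestAdjEig (k : ℕ) (E : Finset (Finset α)) (lam : ℝ) : Prop :=
  IsAdjEig k E lam ∧ ∀ mu : ℝ, IsAdjEig k E mu → mu ≤ lam

/-- `G = (V, E)` is a `k`-uniform hyperstar of size `d`: there is a heart `h` and a
disjoint partition of the remaining vertices into `d` parts of size `k-1`, the edges
being the heart together with one part. -/
def IsHyperstar (k d : ℕ) (E : Finset (Finset α)) : Prop :=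
  ∃ (h : α) (P : Fin d → Finset α),
    (∀ i, h ∉ P i) ∧
    (∀ i, (P i).card = k - 1) ∧
    (∀ i j, i ≠ j → Disjoint (P i) (P j)) ∧
    (∀ v : α, v ≠ h → ∃ i, v ∈ P i) ∧
    E = Finset.image (fun i => insert h (P i)) Finset.univ

/-- The hypergraph is connected: any two distinct vertices are joined by a chain of
pairwise intersecting edges. -/
def IsConnectedH (E : Finset (Finset α)) : Prop :=
  ∀ i j : α, i ≠ j → Relation.TransGen (fun a b : α => ∃ e ∈ E, a ∈ e ∧ b ∈ e) i j

/-- For `k` even: the hypergraph is odd-bipartite. -/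
def IsOddBipartite [Fintype α] (E : Finset (Finset α)) : Prop :=
  E = ∅ ∨ ∃ V₁ : Finset α, V₁ ≠ ∅ ∧ V₁ ≠ Finset.univ ∧ ∀ e ∈ E, Odd (e ∩ V₁).card

/-- `G = (V, E)` is a `k`-uniform hypercycle of size `s`. -/
def IsHypercycle (k : ℕ) (s : ℕ) [NeZero s] (E : Finset (Finset α)) : Prop :=
  ∃ P : Fin s → Finset α,
    (∀ i, (P i).card = k) ∧
    (∀ v : α, ∃ i, v ∈ P i) ∧
    E = Finset.image P Finset.univ ∧
    (∀ i : Fin s, (P i ∩ P (i + 1)).card = 1) ∧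
    (∀ i j : Fin s, i ≠ j → j ≠ i + 1 → i ≠ j + 1 → P i ∩ P j = ∅) ∧
    Function.Injective (fun i : Fin s => P i ∩ P (i + 1))
section General

variable {β : Type*} [Fintype β] [DecidableEq β]

/-- Sum of k-th powers. -/
noncomputable def sumPow (k : ℕ) (z : β → ℝ) : ℝ := ∑ i, z i ^ k

/-- The form `Q z^k` (for nonnegative z): vertex-degree part plus `k` times edge products. -/
noncomputable def Fform (k : ℕ) (E : Finset (Finset β)) (z : β → ℝ) : ℝ :=
  (∑ i, (hdeg E i : ℝ) * z i ^ k) + (k : ℝ) * ∑ e ∈ E, ∏ j ∈ e, z j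

lemma sumPow_nonneg {k : ℕ} {z : β → ℝ} (hz : ∀ i, 0 ≤ z i) : 0 ≤ sumPow k z :=
  Finset.sum_nonneg fun i _ => pow_nonneg (hz i) k

lemma sumPow_pos {k : ℕ} {z : β → ℝ} (hz : ∀ i, 0 ≤ z i) (hne : z ≠ 0) :
    0 < sumPow k z := by
  obtain ⟨i, hi⟩ : ∃ i, z i ≠ 0 := by
    by_contra h; push_neg at h; exact hne (funext h)
  have : 0 < z i ^ k := pow_pos (lt_of_le_of_ne (hz i) (Ne.symm hi)) k
  exact lt_of_lt_of_le this (Finset.single_le_sum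
    (fun j _ => pow_nonneg (hz j) k) (Finset.mem_univ i))

lemma adjAct_nonneg {E : Finset (Finset β)} {z : β → ℝ} (hz : ∀ i, 0 ≤ z i) (i : β) :
    0 ≤ adjAct E z i :=
  Finset.sum_nonneg fun e _ => Finset.prod_nonneg fun j _ => hz j

lemma Fform_nonneg {k : ℕ} {E : Finset (Finset β)} {z : β → ℝ} (hz : ∀ i, 0 ≤ z i) :
    0 ≤ Fform k E z := by
  unfold Fform
  have h1 : (0:ℝ) ≤ ∑ i, (hdeg E i : ℝ) * z i ^ k :=
    Finset.sum_nonneg fun i _ => mul_nonneg (Nat.cast_nonneg _) (pow_nonneg (hz i) k)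
  have h2 : (0:ℝ) ≤ ∑ e ∈ E, ∏ j ∈ e, z j :=
    Finset.sum_nonneg fun e _ => Finset.prod_nonneg fun j _ => hz j
  positivity

/-- Key identity: `∑ i, z i * (Q z^{k-1})_i = Fform k E z`. -/
lemma sum_mul_signAct {k : ℕ} (hk1 : 1 ≤ k) {E : Finset (Finset β)}
    (hunif : ∀ e ∈ E, e.card = k) (z : β → ℝ) :
    ∑ i, z i * signAct k E z i = Fform k E z := by
  have key : ∀ i : β, z i * signAct k E z i
      = (hdeg E i : ℝ) * z i ^ k + ∑ e ∈ E.filter (fun e => i ∈ e), ∏ j ∈ e, z j := by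
    intro i
    unfold signAct
    rw [mul_add, Finset.mul_sum]
    congr 1
    · have : z i ^ k = z i ^ (k - 1) * z i := by
        rw [← pow_succ]; congr 1; omega
      rw [this]; ring
    · refine Finset.sum_congr rfl fun e he => ?_
      exact Finset.mul_prod_erase e z (Finset.mem_filter.mp he).2
  rw [Finset.sum_congr rfl fun i _ => key i, Finset.sum_add_distrib]
  unfold Fform
  congr 1
  have step : ∀ i : β, ∑ e ∈ E.filter (fun e => i ∈ e), ∏ j ∈ e, z j
      = ∑ e ∈ E, if i ∈ e then ∏ j ∈ e, z j else 0 := fun i => Finset.sum_filter _ _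
  rw [Finset.sum_congr rfl fun i _ => step i, Finset.sum_comm, Finset.mul_sum]
  refine Finset.sum_congr rfl fun e he => ?_
  have : ∀ j : β, (if j ∈ e then ∏ j ∈ e, z j else 0)
      = if j ∈ e then (fun _ => ∏ j ∈ e, z j) j else 0 := fun j => rfl
  rw [Finset.sum_ite_mem, Finset.univ_inter, Finset.sum_const, ← hunif e he,
    nsmul_eq_mul]

/-- Homogeneity of the form. -/
lemma Fform_smul {k : ℕ} {E : Finset (Finset β)} (hunif : ∀ e ∈ E, e.card = k)
    (s : ℝ) (z : β → ℝ) : Fform k E (fun i => s * z i) = s ^ k * Fform k E z := by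
  unfold Fform
  have h1 : ∑ i, (hdeg E i : ℝ) * (s * z i) ^ k = s ^ k * ∑ i, (hdeg E i : ℝ) * z i ^ k := by
    rw [Finset.mul_sum]
    exact Finset.sum_congr rfl fun i _ => by rw [mul_pow]; ring
  have h2 : ∑ e ∈ E, ∏ j ∈ e, (s * z j) = s ^ k * ∑ e ∈ E, ∏ j ∈ e, z j := by
    rw [Finset.mul_sum]
    refine Finset.sum_congr rfl fun e he => ?_
    rw [Finset.prod_mul_distrib, Finset.prod_const, hunif e he]
  rw [h1, h2]; ring

lemma sumPow_smul {k : ℕ} (s : ℝ) (z : β → ℝ) :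
    sumPow k (fun i => s * z i) = s ^ k * sumPow k z := by
  unfold sumPow
  rw [Finset.mul_sum]
  exact Finset.sum_congr rfl fun i _ => by rw [mul_pow]

/-- Existence of a maximizer of the form on the nonnegative unit `k`-sphere. -/
lemma exists_maximizer [Nonempty β] (k : ℕ) (hk1 : 1 ≤ k) (E : Finset (Finset β)) :
    ∃ z : β → ℝ, (∀ i, 0 ≤ z i) ∧ sumPow k z = 1 ∧
      ∀ w : β → ℝ, (∀ i, 0 ≤ w i) → sumPow k w = 1 → Fform k E w ≤ Fform k E z := by
  classical
  set K : Set (β → ℝ) := {z | (∀ i, 0 ≤ z i) ∧ sumPow k z = 1} with hK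
  have hcont : Continuous (sumPow k (β := β)) := by
    unfold sumPow; fun_prop
  have hFcont : Continuous (Fform k E (β := β)) := by
    unfold Fform; fun_prop
  have hclosed : IsClosed K := by
    have h1 : IsClosed {z : β → ℝ | ∀ i, 0 ≤ z i} := by
      have : {z : β → ℝ | ∀ i, 0 ≤ z i} = ⋂ i, {z | 0 ≤ z i} := by
        ext z; simp
      rw [this]
      exact isClosed_iInter fun i => isClosed_le continuous_const (continuous_apply i)
    exact h1.inter (isClosed_eq hcont continuous_const)
  have hsub : K ⊆ Set.Icc (0 : β → ℝ) 1 := by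
    rintro z ⟨hz0, hz1⟩
    constructor
    · intro i; exact hz0 i
    · intro i
      have hle : z i ^ k ≤ 1 := by
        rw [← hz1]
        exact Finset.single_le_sum (fun j _ => pow_nonneg (hz0 j) k) (Finset.mem_univ i)
      exact (pow_le_one_iff_of_nonneg (hz0 i) (by omega)).mp hle
  have hcomp : IsCompact K := IsCompact.of_isClosed_subset isCompact_Icc hclosed hsub
  have hne : K.Nonempty := by
    obtain ⟨b⟩ := ‹Nonempty β›
    refine ⟨fun i => if i = b then 1 else 0, fun i => by positivity, ?_⟩
    unfold sumPow
    have : ∀ i : β, ((if i = b then (1:ℝ) else 0)) ^ k = if i = b then 1 else 0 := by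
      intro i; split <;> simp [zero_pow (by omega : k ≠ 0)]
    simp only [this]
    simp
  obtain ⟨z, hzK, hzmax⟩ := hcomp.exists_isMaxOn hne hFcont.continuousOn
  exact ⟨z, hzK.1, hzK.2, fun w hw0 hw1 => hzmax ⟨hw0, hw1⟩⟩

/-- Scaling: the maximizer value bounds the form on all nonnegative vectors. -/
lemma Fform_le_of_max {k : ℕ} (hk1 : 1 ≤ k) {E : Finset (Finset β)}
    (hunif : ∀ e ∈ E, e.card = k) {z : β → ℝ}
    (hmax : ∀ w : β → ℝ, (∀ i, 0 ≤ w i) → sumPow k w = 1 → Fform k E w ≤ Fform k E z)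
    (w : β → ℝ) (hw0 : ∀ i, 0 ≤ w i) :
    Fform k E w ≤ Fform k E z * sumPow k w := by
  by_cases hw : w = 0
  · subst hw
    have h0 : Fform k E (fun _ => (0:ℝ)) = 0 := by
      unfold Fform
      have h1 : ∀ i : β, (hdeg E i : ℝ) * (0:ℝ) ^ k = 0 := by
        intro i; rw [zero_pow (by omega : k ≠ 0)]; ring
      have h2 : ∀ e ∈ E, ∏ _j ∈ e, (0:ℝ) = 0 := by
        intro e he
        rw [Finset.prod_const, zero_pow]
        rw [hunif e he]; omega
      rw [Finset.sum_congr rfl fun i _ => h1 i, Finset.sum_congr rfl h2]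
      simp
    have hsz : sumPow k (fun _ : β => (0:ℝ)) = 0 := by
      unfold sumPow; simp [zero_pow (by omega : k ≠ 0)]
    show Fform k E (fun _ : β => (0:ℝ)) ≤ _ * sumPow k (fun _ : β => (0:ℝ))
    rw [h0, hsz, mul_zero]
  · have hs : 0 < sumPow k w := sumPow_pos hw0 hw
    set r : ℝ := (sumPow k w) ^ ((k : ℝ))⁻¹ with hr
    have hrpos : 0 < r := Real.rpow_pos_of_pos hs _
    have hrk : r ^ k = sumPow k w := Real.rpow_inv_natCast_pow hs.le (by omega)
    set u : β → ℝ := fun i => r⁻¹ * w i with hu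
    have hu0 : ∀ i, 0 ≤ u i := fun i => mul_nonneg (inv_nonneg.mpr hrpos.le) (hw0 i)
    have hu1 : sumPow k u = 1 := by
      rw [hu, sumPow_smul, inv_pow, hrk, inv_mul_cancel₀ hs.ne']
    have := hmax u hu0 hu1
    have hwu : Fform k E w = r ^ k * Fform k E u := by
      have : Fform k E (fun i => r * u i) = r ^ k * Fform k E u := Fform_smul hunif r u
      have hwi : (fun i => r * u i) = w := by
        funext i; rw [hu]; field_simp
      rw [← hwi, this]
    rw [hwu, ← hrk]
    calc r ^ k * Fform k E u ≤ r ^ k * Fform k E z := by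
          apply mul_le_mul_of_nonneg_left this (pow_nonneg hrpos.le k)
      _ = Fform k E z * r ^ k := by ring

end General
section General2

variable {β : Type*} [Fintype β] [DecidableEq β]

lemma sumPow_update (k : ℕ) (z : β → ℝ) (i : β) (t : ℝ) :
    sumPow k (Function.update z i (z i + t)) = sumPow k z + ((z i + t) ^ k - z i ^ k) := by
  unfold sumPow
  rw [← Finset.add_sum_erase _ _ (Finset.mem_univ i),
      ← Finset.add_sum_erase _ (fun j => z j ^ k) (Finset.mem_univ i)]
  have h1 : Function.update z i (z i + t) i = z i + t := Function.update_self i _ z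
  have h2 : ∑ j ∈ Finset.univ.erase i, Function.update z i (z i + t) j ^ k
      = ∑ j ∈ Finset.univ.erase i, z j ^ k := by
    refine Finset.sum_congr rfl fun j hj => ?_
    rw [Function.update_of_ne (Finset.mem_erase.mp hj).1]
  rw [h1, h2]; ring

lemma prod_update_edge (z : β → ℝ) (i : β) (t : ℝ) (e : Finset β) :
    ∏ j ∈ e, Function.update z i (z i + t) j
      = ∏ j ∈ e, z j + (if i ∈ e then t * ∏ j ∈ e.erase i, z j else 0) := by
  by_cases hie : i ∈ e
  · rw [if_pos hie, ← Finset.mul_prod_erase e _ hie, ← Finset.mul_prod_erase e z hie]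
    have h2 : ∏ j ∈ e.erase i, Function.update z i (z i + t) j = ∏ j ∈ e.erase i, z j := by
      refine Finset.prod_congr rfl fun j hj => ?_
      rw [Function.update_of_ne (Finset.mem_erase.mp hj).1]
    rw [Function.update_self, h2]; ring
  · rw [if_neg hie, add_zero]
    refine Finset.prod_congr rfl fun j hj => ?_
    rw [Function.update_of_ne]; rintro rfl; exact hie hj

lemma Fform_update (k : ℕ) (E : Finset (Finset β)) (z : β → ℝ) (i : β) (t : ℝ) :
    Fform k E (Function.update z i (z i + t))
      = Fform k E z + (hdeg E i : ℝ) * ((z i + t) ^ k - z i ^ k)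
        + (k : ℝ) * (t * adjAct E z i) := by
  unfold Fform
  have hdegpart : ∑ j, (hdeg E j : ℝ) * Function.update z i (z i + t) j ^ k
      = (∑ j, (hdeg E j : ℝ) * z j ^ k) + (hdeg E i : ℝ) * ((z i + t) ^ k - z i ^ k) := by
    rw [← Finset.add_sum_erase _ _ (Finset.mem_univ i),
        ← Finset.add_sum_erase _ (fun j => (hdeg E j : ℝ) * z j ^ k) (Finset.mem_univ i)]
    have h2 : ∑ j ∈ Finset.univ.erase i, (hdeg E j : ℝ) * Function.update z i (z i + t) j ^ k
        = ∑ j ∈ Finset.univ.erase i, (hdeg E j : ℝ) * z j ^ k := by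
      refine Finset.sum_congr rfl fun j hj => ?_
      rw [Function.update_of_ne (Finset.mem_erase.mp hj).1]
    rw [Function.update_self, h2]; ring
  have hedgepart : ∑ e ∈ E, ∏ j ∈ e, Function.update z i (z i + t) j
      = (∑ e ∈ E, ∏ j ∈ e, z j) + t * adjAct E z i := by
    rw [Finset.sum_congr rfl fun e (_ : e ∈ E) => prod_update_edge z i t e,
        Finset.sum_add_distrib]
    congr 1
    unfold adjAct
    rw [← Finset.sum_filter, Finset.mul_sum]
  rw [hdegpart, hedgepart]; ring

/-- At a maximizer, zero coordinates have zero adjacency action. -/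
lemma adjAct_eq_zero_of_max {k : ℕ} (hk : 2 ≤ k) {E : Finset (Finset β)}
    (hunif : ∀ e ∈ E, e.card = k) {z : β → ℝ} (hz0 : ∀ i, 0 ≤ z i)
    (hz1 : sumPow k z = 1)
    (hmax : ∀ w : β → ℝ, (∀ i, 0 ≤ w i) → sumPow k w = 1 → Fform k E w ≤ Fform k E z)
    {i : β} (hzi : z i = 0) : adjAct E z i = 0 := by
  set c := Fform k E z with hc
  set a := adjAct E z i with ha
  have hanonneg : 0 ≤ a := adjAct_nonneg hz0 i
  have key : ∀ t : ℝ, 0 < t → (k : ℝ) * a ≤ (c - hdeg E i) * t ^ (k - 1) := by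
    intro t ht
    have hw0 : ∀ j, 0 ≤ Function.update z i (z i + t) j := by
      intro j
      rcases eq_or_ne j i with rfl | hne
      · rw [Function.update_self]; positivity
      · rw [Function.update_of_ne hne]; exact hz0 j
    have hle := Fform_le_of_max (by omega) hunif hmax _ hw0
    rw [Fform_update, sumPow_update, hz1, hzi] at hle
    simp only [zero_add, zero_pow (by omega : k ≠ 0), sub_zero] at hle
    -- hle : c + d * t^k + k*(t*a) ≤ c * (1 + t^k)
    have h2 : (k : ℝ) * (t * a) ≤ (c - hdeg E i) * t ^ k := by nlinarith [hle]
    have htk : t ^ k = t * t ^ (k - 1) := by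
      rw [← pow_succ']; congr 1; omega
    rw [htk] at h2
    have h3 : t * ((k : ℝ) * a) ≤ t * ((c - hdeg E i) * t ^ (k - 1)) := by nlinarith [h2]
    exact (mul_le_mul_iff_right₀ ht).mp h3
  have hlim : Filter.Tendsto (fun t : ℝ => (c - hdeg E i) * t ^ (k - 1))
      (nhdsWithin 0 (Set.Ioi 0)) (nhds 0) := by
    have : Filter.Tendsto (fun t : ℝ => (c - hdeg E i) * t ^ (k - 1)) (nhds 0) (nhds 0) := by
      have := (continuous_const.mul (continuous_pow (k-1)) :
        Continuous fun t : ℝ => (c - (hdeg E i : ℝ)) * t ^ (k-1)).tendsto 0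
      simpa [zero_pow (by omega : k - 1 ≠ 0), Pi.mul_def] using this
    exact this.mono_left nhdsWithin_le_nhds
  have : (k : ℝ) * a ≤ 0 := by
    haveI : (nhdsWithin (0:ℝ) (Set.Ioi 0)).NeBot := nhdsGT_neBot 0
    refine ge_of_tendsto hlim ?_
    filter_upwards [self_mem_nhdsWithin] with t ht
    exact key t ht
  have hkpos : (0:ℝ) < k := by positivity
  nlinarith

/-- At a maximizer, positive coordinates satisfy the eigen-equation. -/
lemma eig_eq_of_max_pos {k : ℕ} (hk : 2 ≤ k) {E : Finset (Finset β)}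
    (hunif : ∀ e ∈ E, e.card = k) {z : β → ℝ} (hz0 : ∀ i, 0 ≤ z i)
    (hz1 : sumPow k z = 1)
    (hmax : ∀ w : β → ℝ, (∀ i, 0 ≤ w i) → sumPow k w = 1 → Fform k E w ≤ Fform k E z)
    {i : β} (hzi : 0 < z i) :
    (hdeg E i : ℝ) * z i ^ (k - 1) + adjAct E z i = Fform k E z * z i ^ (k - 1) := by
  set c := Fform k E z with hc
  set a := adjAct E z i with ha
  set ψ : ℝ → ℝ := fun t => ((hdeg E i : ℝ) - c) * ((z i + t) ^ k - z i ^ k) + (k : ℝ) * a * t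
    with hψ
  have hmax0 : IsLocalMax ψ 0 := by
    have hball : Metric.ball (0:ℝ) (z i) ∈ nhds (0:ℝ) := Metric.ball_mem_nhds 0 hzi
    refine Filter.eventually_of_mem hball fun t ht => ?_
    have htlt : |t| < z i := by simpa [Real.dist_eq] using ht
    have hw0 : ∀ j, 0 ≤ Function.update z i (z i + t) j := by
      intro j
      rcases eq_or_ne j i with rfl | hne
      · rw [Function.update_self]
        have := abs_lt.mp htlt
        linarith [this.1]
      · rw [Function.update_of_ne hne]; exact hz0 j
    have hle := Fform_le_of_max (by omega) hunif hmax _ hw0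
    rw [Fform_update, sumPow_update, hz1] at hle
    have hψ0 : ψ 0 = 0 := by
      show ((hdeg E i : ℝ) - c) * ((z i + 0) ^ k - z i ^ k) + (k : ℝ) * a * 0 = 0
      ring
    rw [hψ0]
    show ((hdeg E i : ℝ) - c) * ((z i + t) ^ k - z i ^ k) + (k : ℝ) * a * t ≤ 0
    nlinarith [hle]
  have hder : HasDerivAt ψ (((hdeg E i : ℝ) - c) * ((k : ℝ) * z i ^ (k - 1)) + (k : ℝ) * a) 0 := by
    have h1 : HasDerivAt (fun t : ℝ => z i + t) 1 0 := (hasDerivAt_id 0).const_add (z i)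
    have h2 : HasDerivAt (fun t : ℝ => (z i + t) ^ k) ((k : ℝ) * (z i + 0) ^ (k - 1) * 1) 0 :=
      h1.pow k
    have h3 : HasDerivAt (fun t : ℝ => (z i + t) ^ k - z i ^ k)
        ((k : ℝ) * (z i + 0) ^ (k - 1) * 1) 0 := h2.sub_const _
    have h4 := (h3.const_mul ((hdeg E i : ℝ) - c)).add
      ((hasDerivAt_id 0).const_mul ((k : ℝ) * a))
    simpa [add_zero, mul_one, Pi.add_def] using h4
  have hzero := hmax0.deriv_eq_zero
  rw [hder.deriv] at hzero
  have hkne : (k : ℝ) ≠ 0 := by positivity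
  have hfac : (k : ℝ) * (((hdeg E i : ℝ) - c) * z i ^ (k - 1) + a) = 0 := by
    nlinarith [hzero]
  have h5 : ((hdeg E i : ℝ) - c) * z i ^ (k - 1) + a = 0 :=
    (mul_eq_zero.mp hfac).resolve_left hkne
  nlinarith [h5]

/-- The maximizer is an eigenvector with eigenvalue the max form value. -/
lemma maximizer_is_eig {k : ℕ} (hk : 2 ≤ k) {E : Finset (Finset β)}
    (hunif : ∀ e ∈ E, e.card = k) {z : β → ℝ} (hz0 : ∀ i, 0 ≤ z i)
    (hz1 : sumPow k z = 1)
    (hmax : ∀ w : β → ℝ, (∀ i, 0 ≤ w i) → sumPow k w = 1 → Fform k E w ≤ Fform k E z) :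
    ∀ i, signAct k E z i = Fform k E z * z i ^ (k - 1) := by
  intro i
  rcases eq_or_lt_of_le (hz0 i) with hzi | hzi
  · have hz : z i = 0 := hzi.symm
    have hadj : adjAct E z i = 0 := adjAct_eq_zero_of_max hk hunif hz0 hz1 hmax hz
    show (hdeg E i : ℝ) * z i ^ (k - 1) + adjAct E z i = Fform k E z * z i ^ (k - 1)
    rw [hadj, hz, zero_pow (by omega : k - 1 ≠ 0)]
    ring
  · have h := eig_eq_of_max_pos hk hunif hz0 hz1 hmax hzi
    show (hdeg E i : ℝ) * z i ^ (k - 1) + adjAct E z i = Fform k E z * z i ^ (k - 1)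
    linarith [h]

end General2
section General3

variable {β : Type*} [Fintype β] [DecidableEq β]

/-- Every H-eigenvalue of the signless Laplacian is bounded by the max form value. -/
lemma abs_eig_le_max {k : ℕ} (hk : 2 ≤ k) {E : Finset (Finset β)}
    (hunif : ∀ e ∈ E, e.card = k) {z : β → ℝ}
    (hmax : ∀ w : β → ℝ, (∀ i, 0 ≤ w i) → sumPow k w = 1 → Fform k E w ≤ Fform k E z)
    {μ : ℝ} (hμ : IsSignEig k E μ) : |μ| ≤ Fform k E z := by
  obtain ⟨x, hx0, hxeq⟩ := hμ
  set y : β → ℝ := fun i => |x i| with hy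
  have hy0 : ∀ i, 0 ≤ y i := fun i => abs_nonneg _
  have hyne : y ≠ 0 := by
    intro h
    apply hx0; funext i
    have := congrFun h i
    simpa [hy, abs_eq_zero] using this
  have key : ∀ i, |μ| * y i ^ (k - 1) ≤ signAct k E y i := by
    intro i
    have h1 : |μ| * y i ^ (k - 1) = |signAct k E x i| := by
      rw [hxeq i, abs_mul, abs_pow]
    rw [h1]
    unfold signAct
    refine le_trans (abs_add_le _ _) ?_
    apply add_le_add
    · rw [abs_mul, abs_pow, Nat.abs_cast]
    · refine le_trans (Finset.abs_sum_le_sum_abs _ _) ?_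
      refine Finset.sum_le_sum fun e _ => ?_
      rw [Finset.abs_prod]
  have hmul : |μ| * sumPow k y ≤ Fform k E y := by
    rw [← sum_mul_signAct (by omega) hunif y]
    unfold sumPow
    rw [Finset.mul_sum]
    refine Finset.sum_le_sum fun i _ => ?_
    have h2 : |μ| * y i ^ k = y i * (|μ| * y i ^ (k - 1)) := by
      have : y i ^ k = y i * y i ^ (k - 1) := by
        rw [← pow_succ']; congr 1; omega
      rw [this]; ring
    rw [h2]
    exact mul_le_mul_of_nonneg_left (key i) (hy0 i)
  have hle2 : Fform k E y ≤ Fform k E z * sumPow k y :=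
    Fform_le_of_max (by omega) hunif hmax y hy0
  have hpos : 0 < sumPow k y := sumPow_pos hy0 hyne
  have := le_trans hmul hle2
  exact le_of_mul_le_mul_right (by linarith [this]) hpos

/-- The largest H-eigenvalue equals the max form value, and is nonnegative. -/
lemma largest_eq_max {k : ℕ} (hk : 2 ≤ k) {E : Finset (Finset β)}
    (hunif : ∀ e ∈ E, e.card = k) {z : β → ℝ} (hz0 : ∀ i, 0 ≤ z i)
    (hz1 : sumPow k z = 1)
    (hmax : ∀ w : β → ℝ, (∀ i, 0 ≤ w i) → sumPow k w = 1 → Fform k E w ≤ Fform k E z)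
    {lam : ℝ} (hlam : IsLargestSignEig k E lam) :
    lam = Fform k E z := by
  have hzne : z ≠ 0 := by
    intro h
    rw [h] at hz1
    unfold sumPow at hz1
    simp [zero_pow (by omega : k ≠ 0)] at hz1
  have heig : IsSignEig k E (Fform k E z) :=
    ⟨z, hzne, maximizer_is_eig hk hunif hz0 hz1 hmax⟩
  have h1 : lam ≤ Fform k E z :=
    le_trans (le_abs_self lam) (abs_eig_le_max hk hunif hmax hlam.1)
  exact le_antisymm h1 (hlam.2 _ heig)

/-- At a maximizer, any edge containing a zero coordinate is entirely zero. -/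
lemma edge_zero_of_max {k : ℕ} (hk : 2 ≤ k) {E : Finset (Finset β)}
    (hunif : ∀ e ∈ E, e.card = k) {z : β → ℝ} (hz0 : ∀ i, 0 ≤ z i)
    (hz1 : sumPow k z = 1)
    (hmax : ∀ w : β → ℝ, (∀ i, 0 ≤ w i) → sumPow k w = 1 → Fform k E w ≤ Fform k E z)
    {e : Finset β} (he : e ∈ E) {j₀ : β} (hj₀ : j₀ ∈ e) (hzj₀ : z j₀ = 0) :
    ∀ j ∈ e, z j = 0 := by
  by_contra hcon
  push_neg at hcon
  obtain ⟨j₁, hj₁, hzj₁⟩ := hcon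
  classical
  set D : Finset β := e.filter (fun j => z j = 0) with hD
  set m : ℕ := D.card with hm
  have hj₀D : j₀ ∈ D := Finset.mem_filter.mpr ⟨hj₀, hzj₀⟩
  have hm1 : 1 ≤ m := Finset.card_pos.mpr ⟨j₀, hj₀D⟩
  have hDe : D ⊂ e := by
    refine Finset.ssubset_iff_of_subset (Finset.filter_subset _ _) |>.mpr ?_
    exact ⟨j₁, hj₁, fun h => hzj₁ (Finset.mem_filter.mp h).2⟩
  have hmk : m < k := by
    rw [← hunif e he]
    exact Finset.card_lt_card hDe
  set P : ℝ := ∏ j ∈ e.filter (fun j => ¬ z j = 0), z j with hP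
  have hPpos : 0 < P := by
    refine Finset.prod_pos fun j hj => ?_
    have := Finset.mem_filter.mp hj
    exact lt_of_le_of_ne (hz0 j) (Ne.symm this.2)
  set c := Fform k E z with hc
  have key : ∀ t : ℝ, 0 < t → (k : ℝ) * P ≤ c * m * t ^ (k - m) := by
    intro t ht
    set w : β → ℝ := fun j => z j + (if j ∈ D then t else 0) with hw
    have hw0 : ∀ j, 0 ≤ w j := by
      intro j
      rcases Finset.decidableMem j D with h | h
      · simp only [hw, if_neg h, add_zero]; exact hz0 j
      · simp only [hw, if_pos h]
        have := hz0 j; linarith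
    have hwz : ∀ j, z j ≤ w j := by
      intro j
      simp only [hw]
      split <;> [linarith; linarith]
    have hzD : ∀ j ∈ D, z j = 0 := fun j hj => (Finset.mem_filter.mp hj).2
    have hsum : sumPow k w = 1 + m * t ^ k := by
      unfold sumPow
      have hpt : ∀ j : β, w j ^ k = z j ^ k + (if j ∈ D then t ^ k else 0) := by
        intro j
        rcases Finset.decidableMem j D with h | h
        · simp only [hw, if_neg h, add_zero]
        · simp only [hw, if_pos h, hzD j h, zero_add, zero_pow (by omega : k ≠ 0)]
      rw [Finset.sum_congr rfl fun j _ => hpt j, Finset.sum_add_distrib]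
      have : ∀ j : β, (if j ∈ D then t ^ k else 0) = if j ∈ D then (fun _ => t ^ k) j else 0 :=
        fun j => rfl
      rw [Finset.sum_ite_mem, Finset.univ_inter, Finset.sum_const, nsmul_eq_mul]
      unfold sumPow at hz1
      rw [hz1, hm]
    have hprod_e : ∏ j ∈ e, w j = t ^ m * P := by
      rw [← Finset.prod_filter_mul_prod_filter_not e (fun j => z j = 0) w]
      have h1 : ∏ j ∈ e.filter (fun j => z j = 0), w j = t ^ m := by
        have : ∀ j ∈ e.filter (fun j => z j = 0), w j = t := by
          intro j hj
          have hjD : j ∈ D := hj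
          simp only [hw, if_pos hjD, hzD j hjD, zero_add]
        rw [Finset.prod_congr rfl this, Finset.prod_const, hm, hD]
      have h2 : ∏ j ∈ e.filter (fun j => ¬ z j = 0), w j = P := by
        refine Finset.prod_congr rfl fun j hj => ?_
        have hjD : j ∉ D := by
          rw [hD, Finset.mem_filter]
          intro h
          exact (Finset.mem_filter.mp hj).2 h.2
        simp only [hw, if_neg hjD, add_zero]
      rw [h1, h2]
    have hprod_ez : ∏ j ∈ e, z j = 0 :=
      Finset.prod_eq_zero hj₀ hzj₀
    have hF : c + (k : ℝ) * (t ^ m * P) ≤ Fform k E w := by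
      unfold Fform
      rw [hc]
      unfold Fform
      have hdegle : ∑ i, (hdeg E i : ℝ) * z i ^ k ≤ ∑ i, (hdeg E i : ℝ) * w i ^ k := by
        refine Finset.sum_le_sum fun i _ => ?_
        exact mul_le_mul_of_nonneg_left (pow_le_pow_left₀ (hz0 i) (hwz i) k) (Nat.cast_nonneg _)
      have hedge : (∑ f ∈ E, ∏ j ∈ f, z j) + t ^ m * P ≤ ∑ f ∈ E, ∏ j ∈ f, w j := by
        rw [← Finset.add_sum_erase E (fun f => ∏ j ∈ f, w j) he,
            ← Finset.add_sum_erase E (fun f => ∏ j ∈ f, z j) he, hprod_e, hprod_ez]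
        have : ∑ f ∈ E.erase e, ∏ j ∈ f, z j ≤ ∑ f ∈ E.erase e, ∏ j ∈ f, w j := by
          refine Finset.sum_le_sum fun f _ => ?_
          exact Finset.prod_le_prod (fun j _ => hz0 j) (fun j _ => hwz j)
        linarith
      have hk0 : (0:ℝ) ≤ k := Nat.cast_nonneg k
      nlinarith [hdegle, hedge]
    have hFle : Fform k E w ≤ c * (1 + m * t ^ k) := by
      rw [← hsum]
      exact Fform_le_of_max (by omega) hunif hmax w hw0
    have h3 : (k : ℝ) * (t ^ m * P) ≤ c * m * t ^ k := by nlinarith [hF, hFle]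
    have htk : t ^ k = t ^ m * t ^ (k - m) := by
      rw [← pow_add]; congr 1; omega
    rw [htk] at h3
    have h4 : t ^ m * ((k : ℝ) * P) ≤ t ^ m * (c * m * t ^ (k - m)) := by nlinarith [h3]
    exact (mul_le_mul_iff_right₀ (pow_pos ht m)).mp h4
  have hlim : Filter.Tendsto (fun t : ℝ => c * m * t ^ (k - m))
      (nhdsWithin 0 (Set.Ioi 0)) (nhds 0) := by
    have h5 : Filter.Tendsto (fun t : ℝ => c * m * t ^ (k - m)) (nhds 0) (nhds 0) := by
      have := (continuous_const.mul (continuous_pow (k - m)) :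
        Continuous fun t : ℝ => (c * m) * t ^ (k - m)).tendsto 0
      simpa [zero_pow (by omega : k - m ≠ 0), Pi.mul_def] using this
    exact h5.mono_left nhdsWithin_le_nhds
  have hfin : (k : ℝ) * P ≤ 0 := by
    haveI : (nhdsWithin (0:ℝ) (Set.Ioi 0)).NeBot := nhdsGT_neBot 0
    refine ge_of_tendsto hlim ?_
    filter_upwards [self_mem_nhdsWithin] with t ht
    exact key t ht
  have : (0:ℝ) < k := by positivity
  nlinarith

/-- With connectivity, the maximizer is strictly positive. -/
lemma pos_of_connected_max {k : ℕ} (hk : 2 ≤ k) {E : Finset (Finset β)}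
    (hunif : ∀ e ∈ E, e.card = k) {z : β → ℝ} (hz0 : ∀ i, 0 ≤ z i)
    (hz1 : sumPow k z = 1)
    (hmax : ∀ w : β → ℝ, (∀ i, 0 ≤ w i) → sumPow k w = 1 → Fform k E w ≤ Fform k E z)
    (hconn : IsConnectedH E) : ∀ i, 0 < z i := by
  obtain ⟨i0, hi0⟩ : ∃ i, 0 < z i := by
    by_contra h
    push_neg at h
    have : ∀ i, z i = 0 := fun i => le_antisymm (h i) (hz0 i)
    unfold sumPow at hz1
    rw [Finset.sum_congr rfl fun i _ => by rw [this i]] at hz1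
    simp [zero_pow (by omega : k ≠ 0)] at hz1
  have step : ∀ a b : β, (∃ e ∈ E, a ∈ e ∧ b ∈ e) → 0 < z a → 0 < z b := by
    rintro a b ⟨e, he, hae, hbe⟩ hza
    rcases eq_or_lt_of_le (hz0 b) with hzb | hzb
    · have := edge_zero_of_max hk hunif hz0 hz1 hmax he hbe hzb.symm a hae
      exact absurd this hza.ne'
    · exact hzb
  have main : ∀ a b : β, Relation.TransGen (fun a b : β => ∃ e ∈ E, a ∈ e ∧ b ∈ e) a b →
      0 < z a → 0 < z b := by
    intro a b hT
    induction hT with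
    | single h => exact fun ha => step _ _ h ha
    | tail _ h ih => exact fun ha => step _ _ h (ih ha)
  intro v
  rcases eq_or_ne v i0 with rfl | hne
  · exact hi0
  · exact main i0 v (hconn i0 v (Ne.symm hne)) hi0

end General3
section Transport

variable {α : Type*} [Fintype α] [DecidableEq α]

/-- Extension by zero of a vector on a subtype. -/
noncomputable def extZ (S : Finset α) (z' : {x : α // x ∈ S} → ℝ) : α → ℝ :=
  fun i => if h : i ∈ S then z' ⟨i, h⟩ else 0

lemma extZ_val {S : Finset α} (z' : {x : α // x ∈ S} → ℝ) (i' : {x : α // x ∈ S}) :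
    extZ S z' ↑i' = z' i' := by
  unfold extZ
  rw [dif_pos i'.2]

lemma subtype_map_of_subset {S : Finset α} {e : Finset α} (he : e ⊆ S) :
    (e.subtype (fun x => x ∈ S)).map (Function.Embedding.subtype _) = e := by
  rw [Finset.subtype_map, Finset.filter_true_of_mem fun x hx => he hx]

lemma subtype_injOn {S : Finset α} {e₁ e₂ : Finset α} (h₁ : e₁ ⊆ S) (h₂ : e₂ ⊆ S)
    (h : e₁.subtype (fun x => x ∈ S) = e₂.subtype (fun x => x ∈ S)) : e₁ = e₂ := by
  rw [← subtype_map_of_subset h₁, ← subtype_map_of_subset h₂, h]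

lemma prod_subtype_eq {S : Finset α} {e : Finset α} (he : e ⊆ S) (f : α → ℝ) :
    ∏ j' ∈ e.subtype (fun x => x ∈ S), f ↑j' = ∏ j ∈ e, f j := by
  conv_rhs => rw [← Finset.filter_true_of_mem fun x hx => he hx,
    ← Finset.subtype_map (p := fun x => x ∈ S), Finset.prod_map]
  rfl

lemma sum_subtype_eq {S : Finset α} (f : α → ℝ) :
    ∑ i' : {x : α // x ∈ S}, f ↑i' = ∑ i ∈ S, f i := by
  rw [Finset.sum_subtype (p := fun x => x ∈ S) S (fun x => Iff.rfl) f]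

lemma erase_subtype_eq {S : Finset α} (e : Finset α) (i' : {x : α // x ∈ S}) :
    (e.subtype (fun x => x ∈ S)).erase i' = (e.erase ↑i').subtype (fun x => x ∈ S) := by
  ext j'
  simp only [Finset.mem_erase, Finset.mem_subtype, ← Subtype.coe_ne_coe]

variable {k : ℕ} {E : Finset (Finset α)} {S : Finset α}
  {E' : Finset (Finset {x : α // x ∈ S})}

lemma unif_sub (hE' : E' = (E.filter (fun e => e ⊆ S)).image
      (fun e => e.subtype (fun x => x ∈ S)))
    (hunif : ∀ e ∈ E, e.card = k) : ∀ e' ∈ E', e'.card = k := by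
  intro e' he'
  rw [hE', Finset.mem_image] at he'
  obtain ⟨e, he, rfl⟩ := he'
  rw [Finset.mem_filter] at he
  rw [Finset.card_subtype, Finset.filter_true_of_mem fun x hx => he.2 hx]
  exact hunif e he.1

lemma filter_sub_eq (hE' : E' = (E.filter (fun e => e ⊆ S)).image
      (fun e => e.subtype (fun x => x ∈ S))) (i' : {x : α // x ∈ S}) :
    E'.filter (fun e' => i' ∈ e')
      = ((E.filter (fun e => e ⊆ S)).filter (fun e => ↑i' ∈ e)).image
          (fun e => e.subtype (fun x => x ∈ S)) := by
  rw [hE', Finset.filter_image]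
  congr 1
  refine Finset.filter_congr fun e _ => ?_
  simp [Finset.mem_subtype]

lemma hdeg_sub_le (hE' : E' = (E.filter (fun e => e ⊆ S)).image
      (fun e => e.subtype (fun x => x ∈ S))) (i' : {x : α // x ∈ S}) :
    hdeg E' i' ≤ hdeg E ↑i' := by
  unfold hdeg
  rw [filter_sub_eq hE' i']
  refine le_trans Finset.card_image_le (Finset.card_le_card ?_)
  intro e he
  simp only [Finset.mem_filter] at he ⊢
  exact ⟨he.1.1, he.2⟩

lemma sumPow_extZ (z' : {x : α // x ∈ S} → ℝ) (hk : k ≠ 0) :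
    sumPow k (extZ S z') = sumPow k z' := by
  unfold sumPow
  have h1 : ∑ i' : {x : α // x ∈ S}, extZ S z' ↑i' ^ k = ∑ i ∈ S, extZ S z' i ^ k :=
    sum_subtype_eq (fun i => extZ S z' i ^ k)
  have h2 : ∑ i ∈ S, extZ S z' i ^ k = ∑ i, extZ S z' i ^ k := by
    refine Finset.sum_subset (Finset.subset_univ S) ?_
    intro i _ hiS
    unfold extZ
    rw [dif_neg hiS, zero_pow hk]
  rw [← h2, ← h1]
  exact Finset.sum_congr rfl fun i' _ => by rw [extZ_val]

lemma extZ_nonneg {z' : {x : α // x ∈ S} → ℝ} (hz0 : ∀ i', 0 ≤ z' i') :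
    ∀ i, 0 ≤ extZ S z' i := by
  intro i; unfold extZ
  split
  · apply hz0
  · exact le_refl 0

lemma Fform_extZ_le (hE' : E' = (E.filter (fun e => e ⊆ S)).image
      (fun e => e.subtype (fun x => x ∈ S)))
    (z' : {x : α // x ∈ S} → ℝ) (hz0 : ∀ i', 0 ≤ z' i') :
    Fform k E' z' ≤ Fform k E (extZ S z') := by
  have hext0 : ∀ i, 0 ≤ extZ S z' i := extZ_nonneg hz0
  unfold Fform
  have hdegpart : ∑ i' : {x : α // x ∈ S}, (hdeg E' i' : ℝ) * z' i' ^ k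
      ≤ ∑ i, (hdeg E i : ℝ) * extZ S z' i ^ k := by
    have step1 : ∑ i' : {x : α // x ∈ S}, (hdeg E' i' : ℝ) * z' i' ^ k
        ≤ ∑ i' : {x : α // x ∈ S}, (hdeg E ↑i' : ℝ) * z' i' ^ k :=
      Finset.sum_le_sum fun i' _ => mul_le_mul_of_nonneg_right
        (by exact_mod_cast hdeg_sub_le hE' i') (pow_nonneg (hz0 i') k)
    have step2 : ∑ i' : {x : α // x ∈ S}, (hdeg E ↑i' : ℝ) * z' i' ^ k
        = ∑ i ∈ S, (hdeg E i : ℝ) * extZ S z' i ^ k := by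
      rw [← sum_subtype_eq (fun i => (hdeg E i : ℝ) * extZ S z' i ^ k)]
      exact Finset.sum_congr rfl fun i' _ => by rw [extZ_val]
    have step3 : ∑ i ∈ S, (hdeg E i : ℝ) * extZ S z' i ^ k
        ≤ ∑ i, (hdeg E i : ℝ) * extZ S z' i ^ k :=
      Finset.sum_le_sum_of_subset_of_nonneg (Finset.subset_univ S)
        (fun i _ _ => mul_nonneg (Nat.cast_nonneg _) (pow_nonneg (hext0 i) k))
    linarith [step1, step2 ▸ step1, step3]
  have hedge : ∑ e' ∈ E', ∏ j' ∈ e', z' j' ≤ ∑ e ∈ E, ∏ j ∈ e, extZ S z' j := by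
    have h1 : ∑ e' ∈ E', ∏ j' ∈ e', z' j'
        = ∑ e ∈ E.filter (fun e => e ⊆ S), ∏ j ∈ e, extZ S z' j := by
      rw [hE', Finset.sum_image (fun e₁ h₁ e₂ h₂ h =>
        subtype_injOn (Finset.mem_filter.mp h₁).2 (Finset.mem_filter.mp h₂).2 h)]
      refine Finset.sum_congr rfl fun e he => ?_
      have heS : e ⊆ S := (Finset.mem_filter.mp he).2
      rw [← prod_subtype_eq heS (extZ S z')]
      exact Finset.prod_congr rfl fun j' _ => (extZ_val z' j').symm
    rw [h1]
    exact Finset.sum_le_sum_of_subset_of_nonneg (Finset.filter_subset _ _)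
      (fun e _ _ => Finset.prod_nonneg fun j _ => hext0 j)
  have hk0 : (0:ℝ) ≤ k := Nat.cast_nonneg k
  have := mul_le_mul_of_nonneg_left hedge hk0
  linarith [hdegpart, this]

lemma hdeg_sub_eq (hE' : E' = (E.filter (fun e => e ⊆ S)).image
      (fun e => e.subtype (fun x => x ∈ S)))
    (hall : ∀ e ∈ E, e ⊆ S) (i' : {x : α // x ∈ S}) :
    hdeg E' i' = hdeg E ↑i' := by
  unfold hdeg
  rw [filter_sub_eq hE' i', Finset.filter_true_of_mem hall,
    Finset.card_image_of_injOn]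
  intro e₁ h₁ e₂ h₂ h
  have h₁' := Finset.mem_coe.mp h₁
  have h₂' := Finset.mem_coe.mp h₂
  exact subtype_injOn (hall _ (Finset.mem_filter.mp h₁').1)
    (hall _ (Finset.mem_filter.mp h₂').1) h

lemma signAct_transport (hE' : E' = (E.filter (fun e => e ⊆ S)).image
      (fun e => e.subtype (fun x => x ∈ S)))
    (hall : ∀ e ∈ E, e ⊆ S) (x : α → ℝ) (i' : {x : α // x ∈ S}) :
    signAct k E' (fun j' => x ↑j') i' = signAct k E x ↑i' := by
  unfold signAct
  rw [hdeg_sub_eq hE' hall i']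
  congr 1
  rw [filter_sub_eq hE' i', Finset.filter_true_of_mem hall,
    Finset.sum_image (fun e₁ h₁ e₂ h₂ h =>
      subtype_injOn (hall _ (Finset.mem_filter.mp h₁).1)
        (hall _ (Finset.mem_filter.mp h₂).1) h)]
  refine Finset.sum_congr rfl fun e he => ?_
  rw [erase_subtype_eq]
  have hsub : e.erase ↑i' ⊆ S := fun x hx => hall e (Finset.mem_filter.mp he).1
    (Finset.mem_of_mem_erase hx)
  exact prod_subtype_eq hsub x

end Transport
section FinN

variable {n k : ℕ}

lemma erase_maps_to (hk : k ≠ 0) (E : Finset (Finset (Fin n)))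
    (hunif : ∀ e ∈ E, e.card = k) (i : Fin n) :
    ∀ e ∈ E.filter (fun e => i ∈ e),
      e.erase i ∈ Finset.powersetCard (k-1) (Finset.univ.erase i) := by
  intro e he
  obtain ⟨heE, hie⟩ := Finset.mem_filter.mp he
  rw [Finset.mem_powersetCard]
  constructor
  · intro x hx
    rw [Finset.mem_erase] at hx ⊢
    exact ⟨hx.1, Finset.mem_univ x⟩
  · rw [Finset.card_erase_of_mem hie, hunif e heE]

lemma card_target (i : Fin n) :
    (Finset.powersetCard (k-1) ((Finset.univ : Finset (Fin n)).erase i)).card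
      = (n-1).choose (k-1) := by
  rw [Finset.card_powersetCard, Finset.card_erase_of_mem (Finset.mem_univ i),
    Finset.card_univ, Fintype.card_fin]

lemma erase_inj_on (E : Finset (Finset (Fin n))) (i : Fin n) :
    ∀ e₁ ∈ E.filter (fun e => i ∈ e), ∀ e₂ ∈ E.filter (fun e => i ∈ e),
      e₁.erase i = e₂.erase i → e₁ = e₂ := by
  intro e₁ h₁ e₂ h₂ h
  have hi₁ : i ∈ e₁ := (Finset.mem_filter.mp h₁).2
  have hi₂ : i ∈ e₂ := (Finset.mem_filter.mp h₂).2
  rw [← Finset.insert_erase hi₁, ← Finset.insert_erase hi₂, h]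

lemma hdeg_le_choose (hk : k ≠ 0) (E : Finset (Finset (Fin n)))
    (hunif : ∀ e ∈ E, e.card = k) (i : Fin n) :
    hdeg E i ≤ (n-1).choose (k-1) := by
  classical
  have hsub : (E.filter (fun e => i ∈ e)).image (fun e => e.erase i)
      ⊆ Finset.powersetCard (k-1) (Finset.univ.erase i) := by
    intro s hs
    rw [Finset.mem_image] at hs
    obtain ⟨e, he, rfl⟩ := hs
    exact erase_maps_to hk E hunif i e he
  have hinj : Set.InjOn (fun e : Finset (Fin n) => e.erase i)
      (↑(E.filter (fun e => i ∈ e)) : Set (Finset (Fin n))) := by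
    intro e₁ h₁ e₂ h₂ h
    exact erase_inj_on E i e₁ (Finset.mem_coe.mp h₁) e₂ (Finset.mem_coe.mp h₂) h
  calc hdeg E i = ((E.filter (fun e => i ∈ e)).image (fun e => e.erase i)).card :=
        (Finset.card_image_of_injOn hinj).symm
    _ ≤ _ := Finset.card_le_card hsub
    _ = (n-1).choose (k-1) := card_target i

lemma complete_mem_of_hdeg_eq (hk : k ≠ 0) (E : Finset (Finset (Fin n)))
    (hunif : ∀ e ∈ E, e.card = k) (i : Fin n)
    (hdegeq : hdeg E i = (n-1).choose (k-1)) :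
    ∀ s : Finset (Fin n), s.card = k → i ∈ s → s ∈ E := by
  intro s hsk his
  have hcardle : (Finset.powersetCard (k-1) ((Finset.univ : Finset (Fin n)).erase i)).card
      ≤ (E.filter (fun e => i ∈ e)).card := by
    rw [card_target i, ← hdegeq]
    exact le_refl _
  have hsurj := Finset.surj_on_of_inj_on_of_card_le
    (s := E.filter (fun e => i ∈ e))
    (t := Finset.powersetCard (k-1) (Finset.univ.erase i))
    (fun e _ => e.erase i)
    (fun e he => erase_maps_to hk E hunif i e he)
    (fun e₁ e₂ h₁ h₂ h => erase_inj_on E i e₁ h₁ e₂ h₂ h)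
    hcardle
  have hb : s.erase i ∈ Finset.powersetCard (k-1) (Finset.univ.erase i) := by
    rw [Finset.mem_powersetCard]
    constructor
    · intro x hx
      rw [Finset.mem_erase] at hx ⊢
      exact ⟨hx.1, Finset.mem_univ x⟩
    · rw [Finset.card_erase_of_mem his, hsk]
  obtain ⟨e, he, heq⟩ := hsurj _ hb
  have hie : i ∈ e := (Finset.mem_filter.mp he).2
  have : s = e := by
    rw [← Finset.insert_erase his, heq, Finset.insert_erase hie]
  rw [this]
  exact (Finset.mem_filter.mp he).1

lemma hdeg_complete (hk : k ≠ 0) (hkn : k ≤ n) (i : Fin n) :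
    hdeg (Finset.powersetCard k (Finset.univ : Finset (Fin n))) i = (n-1).choose (k-1) := by
  classical
  set E := Finset.powersetCard k (Finset.univ : Finset (Fin n)) with hE
  have hunif : ∀ e ∈ E, e.card = k := fun e he => (Finset.mem_powersetCard.mp he).2
  have himg : (E.filter (fun e => i ∈ e)).image (fun e => e.erase i)
      = Finset.powersetCard (k-1) (Finset.univ.erase i) := by
    apply Finset.Subset.antisymm
    · intro s hs
      rw [Finset.mem_image] at hs
      obtain ⟨e, he, rfl⟩ := hs
      exact erase_maps_to hk E hunif i e he
    · intro b hb
      rw [Finset.mem_powersetCard] at hb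
      have hib : i ∉ b := fun h => (Finset.mem_erase.mp (hb.1 h)).1 rfl
      have hcard : (insert i b).card = k := by
        rw [Finset.card_insert_of_notMem hib, hb.2]
        omega
      rw [Finset.mem_image]
      refine ⟨insert i b, ?_, Finset.erase_insert hib⟩
      rw [Finset.mem_filter, hE, Finset.mem_powersetCard]
      exact ⟨⟨Finset.subset_univ _, hcard⟩, Finset.mem_insert_self i b⟩
  have hinj : Set.InjOn (fun e : Finset (Fin n) => e.erase i)
      (↑(E.filter (fun e => i ∈ e)) : Set (Finset (Fin n))) := by
    intro e₁ h₁ e₂ h₂ h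
    exact erase_inj_on E i e₁ (Finset.mem_coe.mp h₁) e₂ (Finset.mem_coe.mp h₂) h
  calc hdeg E i = ((E.filter (fun e => i ∈ e)).image (fun e => e.erase i)).card :=
        (Finset.card_image_of_injOn hinj).symm
    _ = _ := by rw [himg, card_target i]

lemma complete_eig (hk3 : 3 ≤ k) (hkn : k ≤ n) (hn : 0 < n) :
    IsSignEig k (Finset.powersetCard k (Finset.univ : Finset (Fin n)))
      (2 * ((n-1).choose (k-1) : ℝ)) := by
  refine ⟨fun _ => 1, ?_, ?_⟩
  · intro h
    have := congrFun h ⟨0, hn⟩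
    simp at this
  · intro i
    set E := Finset.powersetCard k (Finset.univ : Finset (Fin n)) with hE
    show (hdeg E i : ℝ) * (1:ℝ) ^ (k-1)
      + ∑ e ∈ E.filter (fun e => i ∈ e), ∏ _j ∈ e.erase i, (1:ℝ) = _
    have h1 : ∑ e ∈ E.filter (fun e => i ∈ e), ∏ _j ∈ e.erase i, (1:ℝ)
        = (hdeg E i : ℝ) := by
      rw [Finset.sum_congr rfl fun e _ => Finset.prod_const_one, Finset.sum_const,
        nsmul_eq_mul, mul_one]
      rfl
    rw [h1, one_pow, mul_one, mul_one]
    have h2 : hdeg E i = (n-1).choose (k-1) := hdeg_complete (by omega) hkn i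
    rw [h2]
    ring

lemma complete_of_eq (hk : 3 ≤ k) (hkn : k ≤ n) (hn : 0 < n) (E : Finset (Finset (Fin n)))
    (hunif : ∀ e ∈ E, e.card = k) {z : Fin n → ℝ} (hz0 : ∀ i, 0 ≤ z i)
    (hz1 : sumPow k z = 1)
    (heig : ∀ i, signAct k E z i = (2 * ((n-1).choose (k-1) : ℝ)) * z i ^ (k-1)) :
    E = Finset.powersetCard k Finset.univ := by
  classical
  set C : ℝ := ((n-1).choose (k-1) : ℝ) with hC
  have hCd : ∀ i, (hdeg E i : ℝ) ≤ C := fun i => by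
    rw [hC]
    exact_mod_cast hdeg_le_choose (by omega) E hunif i
  have key : ∀ v, 0 < z v → (∀ j, z j ≤ z v) →
      hdeg E v = (n-1).choose (k-1) ∧ (∀ e ∈ E, v ∈ e → ∀ j ∈ e, z j = z v) := by
    intro v hv hmaxv
    have hpow : 0 < z v ^ (k-1) := pow_pos hv _
    have hprodle : ∀ e ∈ E.filter (fun e => v ∈ e), ∏ j ∈ e.erase v, z j
        ≤ z v ^ (k-1) := by
      intro e he
      obtain ⟨heE, hve⟩ := Finset.mem_filter.mp he
      calc ∏ j ∈ e.erase v, z j ≤ ∏ _j ∈ e.erase v, z v :=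
            Finset.prod_le_prod (fun j _ => hz0 j) (fun j _ => hmaxv j)
        _ = z v ^ (k-1) := by
            rw [Finset.prod_const, Finset.card_erase_of_mem hve, hunif e heE]
    have hadjle : adjAct E z v ≤ (hdeg E v : ℝ) * z v ^ (k-1) := by
      unfold adjAct
      calc ∑ e ∈ E.filter (fun e => v ∈ e), ∏ j ∈ e.erase v, z j
          ≤ ∑ _e ∈ E.filter (fun e => v ∈ e), z v ^ (k-1) := Finset.sum_le_sum hprodle
        _ = (hdeg E v : ℝ) * z v ^ (k-1) := by
            rw [Finset.sum_const, nsmul_eq_mul]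
            rfl
    have heq' : (hdeg E v : ℝ) * z v ^ (k-1) + adjAct E z v = 2 * C * z v ^ (k-1) :=
      heig v
    have hdge : C ≤ (hdeg E v : ℝ) := by
      have h2 : (2*C) * z v ^ (k-1) ≤ (2*(hdeg E v : ℝ)) * z v ^ (k-1) := by
        nlinarith [heq', hadjle]
      have := (mul_le_mul_iff_left₀ hpow).mp h2
      linarith
    have hdC : (hdeg E v : ℝ) = C := le_antisymm (hCd v) hdge
    have hdnat : hdeg E v = (n-1).choose (k-1) := by
      rw [hC] at hdC
      exact_mod_cast hdC
    have hadj_eq : adjAct E z v = (hdeg E v : ℝ) * z v ^ (k-1) := by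
      rw [hdC] at heq' ⊢
      linarith [heq']
    have hsum_eq : ∑ e ∈ E.filter (fun e => v ∈ e), ∏ j ∈ e.erase v, z j
        = ∑ _e ∈ E.filter (fun e => v ∈ e), z v ^ (k-1) := by
      rw [Finset.sum_const, nsmul_eq_mul]
      exact hadj_eq
    have hall := (Finset.sum_eq_sum_iff_of_le hprodle).mp hsum_eq
    refine ⟨hdnat, fun e heE hve j hj => ?_⟩
    have hprod := hall e (Finset.mem_filter.mpr ⟨heE, hve⟩)
    rcases eq_or_ne j v with rfl | hjv
    · rfl
    have hje : j ∈ e.erase v := Finset.mem_erase.mpr ⟨hjv, hj⟩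
    by_contra hne
    have hjlt : z j < z v := lt_of_le_of_ne (hmaxv j) hne
    have hfacpos : ∀ x ∈ e.erase v, 0 < z x := by
      intro x hx
      rcases eq_or_lt_of_le (hz0 x) with h0 | h
      · exfalso
        have hzero : ∏ j ∈ e.erase v, z j = 0 := Finset.prod_eq_zero hx h0.symm
        rw [hprod] at hzero
        linarith [hpow]
      · exact h
    have hstrict : ∏ x ∈ e.erase v, z x < ∏ _x ∈ e.erase v, z v :=
      Finset.prod_lt_prod hfacpos (fun x _ => hmaxv x) ⟨j, hje, hjlt⟩
    rw [Finset.prod_const, Finset.card_erase_of_mem hve, hunif e heE, hprod] at hstrict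
    exact lt_irrefl _ hstrict
  -- find the max coordinate
  obtain ⟨v0, _, hv0max⟩ := Finset.exists_max_image Finset.univ z
    ⟨⟨0, hn⟩, Finset.mem_univ _⟩
  have hv0max' : ∀ j, z j ≤ z v0 := fun j => hv0max j (Finset.mem_univ j)
  have hv0pos : 0 < z v0 := by
    obtain ⟨i0, hi0⟩ : ∃ i, 0 < z i := by
      by_contra h
      push_neg at h
      have hzz : ∀ i, z i = 0 := fun i => le_antisymm (h i) (hz0 i)
      unfold sumPow at hz1
      rw [Finset.sum_congr rfl fun i _ => by rw [hzz i]] at hz1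
      simp [zero_pow (by omega : k ≠ 0)] at hz1
    exact lt_of_lt_of_le hi0 (hv0max' i0)
  obtain ⟨hd0, hedge0⟩ := key v0 hv0pos hv0max'
  have hsurj0 := complete_mem_of_hdeg_eq (by omega) E hunif v0 hd0
  have hallmax : ∀ u, z u = z v0 := by
    intro u
    rcases eq_or_ne u v0 with rfl | hne
    · rfl
    have hcard2 : ({v0, u} : Finset (Fin n)).card ≤ k := by
      refine le_trans (Finset.card_insert_le _ _) ?_
      rw [Finset.card_singleton]
      omega
    obtain ⟨t, hsub, htcard⟩ := Finset.exists_superset_card_eq hcard2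
      (by rw [Fintype.card_fin]; exact hkn)
    have htE : t ∈ E := hsurj0 t htcard (hsub (Finset.mem_insert_self _ _))
    exact hedge0 t htE (hsub (Finset.mem_insert_self _ _)) u
      (hsub (Finset.mem_insert_of_mem (Finset.mem_singleton_self u)))
  ext s
  rw [Finset.mem_powersetCard]
  constructor
  · intro hs
    exact ⟨Finset.subset_univ s, hunif s hs⟩
  · rintro ⟨-, hscard⟩
    have hsne : s.Nonempty := Finset.card_pos.mp (by omega)
    obtain ⟨u, hu⟩ := hsne
    have hupos : 0 < z u := by rw [hallmax u]; exact hv0pos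
    have humax : ∀ j, z j ≤ z u := fun j => by rw [hallmax u]; exact hv0max' j
    obtain ⟨hdu, -⟩ := key u hupos humax
    exact complete_mem_of_hdeg_eq (by omega) E hunif u hdu s hscard hu

end FinN
/-- For a `k`-uniform hypergraph `G` on `n` vertices and the
sub-hypergraph `G'` of `G` induced by `S`, with signless Laplacian tensors `Q`, `Q'`:
`λ(Q') ≤ λ(Q)`; if both are connected then `λ(Q') = λ(Q)` iff `G' = G`;
consequently `λ(Q) ≤ 2·C(n-1, k-1)`, with equality iff `G` is complete. -/
theorem largest_sign_eig_sub_hypergraph {n k : ℕ} (hk : 3 ≤ k) (hkn : k ≤ n)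
    (E : Finset (Finset (Fin n))) (hunif : ∀ e ∈ E, e.card = k)
    (S : Finset (Fin n)) (E' : Finset (Finset {x : Fin n // x ∈ S}))
    (hE' : E' = (E.filter (fun e => e ⊆ S)).image
      (fun e => e.subtype (fun x => x ∈ S)))
    (lamQ lamQ' : ℝ) (hQ : IsLargestSignEig k E lamQ)
    (hQ' : IsLargestSignEig k E' lamQ') :
    lamQ' ≤ lamQ ∧
    (IsConnectedH E' → IsConnectedH E → (lamQ' = lamQ ↔ S = Finset.univ)) ∧
    lamQ ≤ 2 * ((n - 1).choose (k - 1) : ℝ) ∧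
    (lamQ = 2 * ((n - 1).choose (k - 1) : ℝ) ↔ E = Finset.univ.powersetCard k) := by
  classical
  have hn : 0 < n := by omega
  haveI : Nonempty (Fin n) := ⟨⟨0, hn⟩⟩
  haveI hSne : Nonempty {x : Fin n // x ∈ S} := by
    obtain ⟨x, hx, -⟩ := hQ'.1
    by_contra h
    exact hx (funext fun v => (h ⟨v⟩).elim)
  have hunif' : ∀ e' ∈ E', e'.card = k := unif_sub hE' hunif
  obtain ⟨z, hz0, hz1, hzmax⟩ := exists_maximizer k (by omega) E
  obtain ⟨z', hz'0, hz'1, hz'max⟩ := exists_maximizer k (by omega) E'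
  have hlamQ : lamQ = Fform k E z := largest_eq_max (by omega) hunif hz0 hz1 hzmax hQ
  have hlamQ' : lamQ' = Fform k E' z' :=
    largest_eq_max (by omega) hunif' hz'0 hz'1 hz'max hQ'
  have heigz := maximizer_is_eig (by omega : 2 ≤ k) hunif hz0 hz1 hzmax
  -- Part 1
  have hsum1 : sumPow k (extZ S z') = 1 := by rw [sumPow_extZ z' (by omega), hz'1]
  have hF1 : Fform k E' z' ≤ Fform k E (extZ S z') := Fform_extZ_le hE' z' hz'0
  have hF2 : Fform k E (extZ S z') ≤ Fform k E z := hzmax _ (extZ_nonneg hz'0) hsum1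
  have hpart1 : lamQ' ≤ lamQ := by
    rw [hlamQ, hlamQ']
    linarith
  -- Part 3
  have hpart3 : lamQ ≤ 2 * ((n - 1).choose (k - 1) : ℝ) := by
    obtain ⟨v0, -, hv0max⟩ := Finset.exists_max_image Finset.univ z
      ⟨⟨0, hn⟩, Finset.mem_univ _⟩
    have hv0max' : ∀ j, z j ≤ z v0 := fun j => hv0max j (Finset.mem_univ j)
    have hv0pos : 0 < z v0 := by
      obtain ⟨i0, hi0⟩ : ∃ i, 0 < z i := by
        by_contra h
        push_neg at h
        have hzz : ∀ i, z i = 0 := fun i => le_antisymm (h i) (hz0 i)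
        unfold sumPow at hz1
        rw [Finset.sum_congr rfl fun i _ => by rw [hzz i]] at hz1
        simp [zero_pow (by omega : k ≠ 0)] at hz1
      exact lt_of_lt_of_le hi0 (hv0max' i0)
    have hpow : 0 < z v0 ^ (k - 1) := pow_pos hv0pos _
    have hprodle : ∀ e ∈ E.filter (fun e => v0 ∈ e), ∏ j ∈ e.erase v0, z j
        ≤ z v0 ^ (k - 1) := by
      intro e he
      obtain ⟨heE, hve⟩ := Finset.mem_filter.mp he
      calc ∏ j ∈ e.erase v0, z j ≤ ∏ _j ∈ e.erase v0, z v0 :=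
            Finset.prod_le_prod (fun j _ => hz0 j) (fun j _ => hv0max' j)
        _ = z v0 ^ (k - 1) := by
            rw [Finset.prod_const, Finset.card_erase_of_mem hve, hunif e heE]
    have hadjle : adjAct E z v0 ≤ (hdeg E v0 : ℝ) * z v0 ^ (k - 1) := by
      unfold adjAct
      calc ∑ e ∈ E.filter (fun e => v0 ∈ e), ∏ j ∈ e.erase v0, z j
          ≤ ∑ _e ∈ E.filter (fun e => v0 ∈ e), z v0 ^ (k - 1) :=
            Finset.sum_le_sum hprodle
        _ = (hdeg E v0 : ℝ) * z v0 ^ (k - 1) := by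
            rw [Finset.sum_const, nsmul_eq_mul]
            rfl
    have heq' : (hdeg E v0 : ℝ) * z v0 ^ (k - 1) + adjAct E z v0
        = Fform k E z * z v0 ^ (k - 1) := heigz v0
    have hdle : (hdeg E v0 : ℝ) ≤ ((n - 1).choose (k - 1) : ℝ) := by
      exact_mod_cast hdeg_le_choose (by omega) E hunif v0
    have h2 : Fform k E z * z v0 ^ (k - 1)
        ≤ (2 * ((n - 1).choose (k - 1) : ℝ)) * z v0 ^ (k - 1) := by
      nlinarith [heq', hadjle, hdle, hpow]
    rw [hlamQ]
    exact (mul_le_mul_iff_left₀ hpow).mp h2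
  -- Part 4
  have himp : lamQ = 2 * ((n - 1).choose (k - 1) : ℝ) → E = Finset.univ.powersetCard k := by
    intro hla
    apply complete_of_eq hk hkn hn E hunif hz0 hz1
    intro i
    rw [heigz i, ← hlamQ, hla]
  have hconv : E = Finset.univ.powersetCard k → lamQ = 2 * ((n - 1).choose (k - 1) : ℝ) := by
    intro hEc
    refine le_antisymm hpart3 ?_
    apply hQ.2
    rw [hEc]
    exact complete_eig hk hkn hn
  refine ⟨hpart1, ?_, hpart3, himp, hconv⟩
  -- Part 2
  intro _hconn' hconn
  constructor
  · intro hEq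
    by_contra hSuniv
    obtain ⟨v, hv⟩ : ∃ v : Fin n, v ∉ S := by
      by_contra h
      push_neg at h
      exact hSuniv (Finset.eq_univ_iff_forall.mpr h)
    have hFeq : Fform k E (extZ S z') = Fform k E z := by
      have : Fform k E' z' = Fform k E z := by rw [← hlamQ', ← hlamQ, hEq]
      linarith
    have hmax2 : ∀ w : Fin n → ℝ, (∀ i, 0 ≤ w i) → sumPow k w = 1 →
        Fform k E w ≤ Fform k E (extZ S z') := by
      intro w hw0 hw1
      rw [hFeq]
      exact hzmax w hw0 hw1
    have hpos := pos_of_connected_max (by omega : 2 ≤ k) hunif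
      (extZ_nonneg hz'0) hsum1 hmax2 hconn
    have hzero : extZ S z' v = 0 := by unfold extZ; rw [dif_neg hv]
    linarith [hpos v]
  · intro hSuniv
    subst hSuniv
    have hall : ∀ e ∈ E, e ⊆ Finset.univ := fun e _ x _ => Finset.mem_univ x
    refine le_antisymm hpart1 ?_
    apply hQ'.2
    obtain ⟨x, hx, heqx⟩ := hQ.1
    refine ⟨fun j' => x ↑j', ?_, fun i' => ?_⟩
    · intro h
      apply hx
      funext i
      exact congrFun h ⟨i, Finset.mem_univ i⟩
    · rw [signAct_transport hE' hall x i', heqx ↑i']
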